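/- With K the ordered field of Puiseux series with real exponents, every point x of the tropical convex hull of v_1, …, v_k ∈ ℝ^d is in the image under the coordinatewise degree map of the ordinary convex hull over K of any positive lifts V_1, …, V_k of the v_i. Concretely: given real scalars c_1, …, c_k with max_i c_i = 0 and x = max_i(c_i + v_i) coordinatewise, there exist elements γ_1, …, γ_k ∈ K with γ_i > 0, Σ γ_i = 1, deg(γ_i) = c_i, and deg(Σ γ_i V_i) = x coordinatewise. -/

import Mathlib

/-- The field of Hahn (generalized Puiseux) series over ℝ with real exponents. -/
abbrev K := HahnSeries ℝ ℝ

/-- The degree: the leading exponent (max-plus convention). -/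
noncomputable def deg (x : K) : ℝ := -x.order

/-- Positivity in the ordered field `K`: positive leading coefficient. -/
def Kpos (x : K) : Prop := 0 < x.coeff x.order

namespace TropAux

/-- `x` has order `r` and positive leading coefficient. -/
def PosAt (r : ℝ) (x : K) : Prop := x.order = r ∧ 0 < x.coeff r

lemma PosAt.ne_zero {r : ℝ} {x : K} (h : PosAt r x) : x ≠ 0 := by
  intro h0
  rw [h0] at h
  simpa using h.2

lemma posAt_of_coeffs {r : ℝ} {x : K} (h1 : 0 < x.coeff r)
    (h2 : ∀ s < r, x.coeff s = 0) : PosAt r x := by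
  have hx : x ≠ 0 := by
    intro h0; rw [h0] at h1; simp at h1
  have hle : x.order ≤ r := HahnSeries.order_le_of_coeff_ne_zero (ne_of_gt h1)
  have hnot : ¬ x.order < r := by
    intro hlt
    exact hx (HahnSeries.coeff_order_eq_zero.mp (h2 _ hlt))
  have : x.order = r := le_antisymm hle (not_lt.mp hnot)
  exact ⟨this, h1⟩

lemma PosAt.kpos {r : ℝ} {x : K} (h : PosAt r x) : Kpos x := by
  unfold Kpos; rw [h.1]; exact h.2

lemma PosAt.deg {r : ℝ} {x : K} (h : PosAt r x) : deg x = -r := by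
  unfold _root_.deg; rw [h.1]

lemma posAt_single {r a : ℝ} (ha : 0 < a) : PosAt r (HahnSeries.single r a) := by
  refine ⟨HahnSeries.order_single (ne_of_gt ha), ?_⟩
  rwa [HahnSeries.coeff_single_same]

lemma PosAt.mul {r s : ℝ} {x y : K} (hx : PosAt r x) (hy : PosAt s y) :
    PosAt (r + s) (x * y) := by
  have hx0 := hx.ne_zero
  have hy0 := hy.ne_zero
  have horder : (x * y).order = r + s := by
    rw [HahnSeries.order_mul hx0 hy0, hx.1, hy.1]
  refine ⟨horder, ?_⟩
  have := HahnSeries.coeff_mul_order_add_order x y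
  rw [hx.1, hy.1] at this
  rw [this, HahnSeries.leadingCoeff_eq, HahnSeries.leadingCoeff_eq, hx.1, hy.1]
  exact mul_pos hx.2 hy.2

lemma PosAt.add {r s : ℝ} {x y : K} (hx : PosAt r x) (hy : PosAt s y) :
    PosAt (min r s) (x + y) := by
  apply posAt_of_coeffs
  · have hxc : 0 ≤ x.coeff (min r s) := by
      rcases lt_or_eq_of_le (min_le_left r s) with h | h
      · rw [HahnSeries.coeff_eq_zero_of_lt_order (by rw [hx.1]; exact h)]
      · rw [h]; exact le_of_lt hx.2
    have hyc : 0 ≤ y.coeff (min r s) := by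
      rcases lt_or_eq_of_le (min_le_right r s) with h | h
      · rw [HahnSeries.coeff_eq_zero_of_lt_order (by rw [hy.1]; exact h)]
      · rw [h]; exact le_of_lt hy.2
    have : 0 < x.coeff (min r s) + y.coeff (min r s) := by
      rcases le_total r s with h | h
      · have hmin : min r s = r := min_eq_left h
        rw [hmin] at hyc ⊢
        linarith [hx.2]
      · have hmin : min r s = s := min_eq_right h
        rw [hmin] at hxc ⊢
        linarith [hy.2]
    simpa [HahnSeries.coeff_add] using this
  · intro s' hs'
    rw [HahnSeries.coeff_add,
      HahnSeries.coeff_eq_zero_of_lt_order (by rw [hx.1]; exact lt_of_lt_of_le hs' (min_le_left r s)),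
      HahnSeries.coeff_eq_zero_of_lt_order (by rw [hy.1]; exact lt_of_lt_of_le hs' (min_le_right r s)),
      add_zero]

lemma posAt_sum {ι : Type*} {s : Finset ι} (hs : s.Nonempty) (f : ι → K) (r : ι → ℝ)
    (h : ∀ i ∈ s, PosAt (r i) (f i)) :
    PosAt (s.inf' hs r) (∑ i ∈ s, f i) := by
  induction hs using Finset.Nonempty.cons_induction with
  | singleton i => simpa using h i (by simp)
  | cons i s his hs ih =>
    rw [Finset.sum_cons, Finset.inf'_cons (H := hs)]
    exact (h i (by simp)).add (ih fun j hj => h j (Finset.mem_cons_of_mem hj))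

lemma inf'_neg_eq {ι : Type*} {s : Finset ι} (H : s.Nonempty) (f : ι → ℝ) :
    s.inf' H (fun i => -(f i)) = - s.sup' H f := by
  induction H using Finset.Nonempty.cons_induction with
  | singleton i => rfl
  | cons i s his hs ih =>
    rw [Finset.inf'_cons (H := hs), Finset.sup'_cons (H := hs), ih, neg_sup]

end TropAux

theorem tropHull_point_lifts {k d : ℕ} [NeZero k]
    (v : Fin k → Fin d → ℝ) (V : Fin k → Fin d → K)
    (hVpos : ∀ i j, Kpos (V i j)) (hVdeg : ∀ i j, deg (V i j) = v i j)
    (c : Fin k → ℝ) (hc : Finset.univ.sup' Finset.univ_nonempty c = 0)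
    (x : Fin d → ℝ)
    (hx : ∀ j, x j = Finset.univ.sup' Finset.univ_nonempty fun i => c i + v i j) :
    ∃ γ : Fin k → K, (∀ i, Kpos (γ i)) ∧ (∑ i, γ i) = 1 ∧
      (∀ i, deg (γ i) = c i) ∧ (∀ j, deg (∑ i, γ i * V i j) = x j) := by
  classical
  open TropAux in
  -- every c i ≤ 0
  have hcle : ∀ i, c i ≤ 0 := fun i => hc ▸ Finset.le_sup' c (Finset.mem_univ i)
  -- the set of indices with c i = 0
  set S : Finset (Fin k) := Finset.univ.filter (fun i => c i = 0) with hS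
  obtain ⟨i₀, _, hi₀⟩ := Finset.exists_mem_eq_sup' (Finset.univ_nonempty (α := Fin k)) c
  have hi₀S : i₀ ∈ S := by simp [hS, ← hi₀, hc]
  have hSne : S.Nonempty := ⟨i₀, hi₀S⟩
  set m : ℕ := S.card with hm
  have hm0 : 0 < m := Finset.card_pos.mpr hSne
  have hmR : (0:ℝ) < (m:ℝ) := by exact_mod_cast hm0
  -- the "tail" sum of monomials for indices outside S
  set T : K := ∑ i ∈ Finset.univ \ S, HahnSeries.single (-(c i)) (1:ℝ) with hT
  -- coefficients of T at non-positive exponents vanish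
  have hTcoeff : ∀ r ≤ (0:ℝ), T.coeff r = 0 := by
    intro r hr
    have hTr : T.coeff r = ∑ i ∈ Finset.univ \ S, (HahnSeries.single (-(c i)) (1:ℝ)).coeff r := by
      rw [hT]; exact map_sum (HahnSeries.coeff.addMonoidHom r) _ _
    rw [hTr]
    apply Finset.sum_eq_zero
    intro i hi
    have hci : c i ≠ 0 := by
      simp only [hS, Finset.mem_sdiff, Finset.mem_filter, Finset.mem_univ, true_and] at hi
      exact hi
    have : c i < 0 := lt_of_le_of_ne (hcle i) hci
    apply HahnSeries.coeff_single_of_ne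
    intro h; rw [h] at hr; linarith
  -- 1 - T is positive of order 0
  have hPos1T : PosAt 0 ((1:K) - T) := by
    apply posAt_of_coeffs
    · rw [HahnSeries.coeff_sub, hTcoeff 0 le_rfl, HahnSeries.coeff_one]
      norm_num
    · intro s hs
      rw [HahnSeries.coeff_sub, hTcoeff s (le_of_lt hs), HahnSeries.coeff_one,
        if_neg (ne_of_lt hs), sub_zero]
  -- define γ
  set E : K := HahnSeries.single (0:ℝ) ((m:ℝ)⁻¹) * ((1:K) - T) with hE
  set γ : Fin k → K := fun i => if c i = 0 then E else HahnSeries.single (-(c i)) (1:ℝ) with hγ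
  have hPosE : PosAt 0 E := by
    have := (posAt_single (r := (0:ℝ)) (inv_pos.mpr hmR)).mul hPos1T
    rw [zero_add] at this
    exact this
  have hγpos : ∀ i, PosAt (-(c i)) (γ i) := by
    intro i
    by_cases h : c i = 0
    · simpa [hγ, h] using hPosE
    · simpa [hγ, h] using posAt_single (r := -(c i)) (a := (1:ℝ)) one_pos
  -- sum of γ = 1
  have hsum : (∑ i, γ i) = 1 := by
    rw [← Finset.sum_sdiff (Finset.subset_univ S)]
    have h1 : ∑ i ∈ Finset.univ \ S, γ i = T := by
      rw [hT]
      apply Finset.sum_congr rfl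
      intro i hi
      have hci : c i ≠ 0 := by
        simp only [hS, Finset.mem_sdiff, Finset.mem_filter, Finset.mem_univ, true_and] at hi
        exact hi
      simp [hγ, hci]
    have h2 : ∑ i ∈ S, γ i = (1:K) - T := by
      have hEi : ∀ i ∈ S, γ i = E := by
        intro i hi
        have : c i = 0 := by simpa [hS] using hi
        simp [hγ, this]
      rw [Finset.sum_congr rfl hEi, Finset.sum_const, ← hm, hE, nsmul_eq_mul]
      rw [← mul_assoc]
      have : (m : K) * HahnSeries.single (0:ℝ) ((m:ℝ)⁻¹) = 1 := by
        have hC : (m : K) = HahnSeries.C ((m:ℝ)) := by push_cast [map_natCast]; rfl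
        rw [hC, HahnSeries.C_apply, HahnSeries.single_mul_single, add_zero,
          mul_inv_cancel₀ (ne_of_gt hmR), ← HahnSeries.C_apply, HahnSeries.C_one]
      rw [this, one_mul]
    rw [h1, h2]; ring
  refine ⟨γ, fun i => (hγpos i).kpos, hsum, fun i => by
    rw [(hγpos i).deg]; ring, ?_⟩
  -- degrees of the coordinate sums
  intro j
  have hVposAt : ∀ i, PosAt (-(v i j)) (V i j) := by
    intro i
    have hd := hVdeg i j
    unfold deg at hd
    have horder : (V i j).order = -(v i j) := by linarith
    exact ⟨horder, by rw [← horder]; exact hVpos i j⟩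
  have hterm : ∀ i ∈ Finset.univ, PosAt (-(c i) + -(v i j)) (γ i * V i j) :=
    fun i _ => (hγpos i).mul (hVposAt i)
  have := posAt_sum Finset.univ_nonempty _ _ hterm
  rw [this.deg, hx j]
  have heq : (Finset.univ.inf' Finset.univ_nonempty fun i => -(c i) + -(v i j))
      = - Finset.univ.sup' Finset.univ_nonempty fun i => c i + v i j := by
    rw [← inf'_neg_eq Finset.univ_nonempty (fun i => c i + v i j)]
    congr 1
    ext i
    ring
  rw [heq]; ring
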